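/- arXiv:math/0005052 — 2 statements merged into one kernel-verified Lean document; each statement's English description precedes it below -/
import Mathlib

section
/- Let w = s_i s_{i±1} s_i · v' be an element of S_n with a reduced word of the form a = v s_i s_{i±1} s_i v' where ℓ(w) = ℓ(v) + ℓ(v') + 3 (i.e., w is not 321-avoiding). Then the mask σ that selects all letters of v, then the first s_i, deselects s_{i±1} and the second s_i, and selects all of v', satisfies |D^0(σ)| = 1 and has exactly 2 zeros; consequently Δ_σ < 0, i.e., |D(σ)| > (ℓ(w) − ℓ(π(w^σ)) − 1)/2. -/
open Polynomial

/-- The simple transposition `s_i = (i, i+1)` (1-based) in `S_n`, acting on `Fin n`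
(0-based positions `i-1` and `i`); equals `1` if `i` is out of range. -/
def gen (n : ℕ) (i : ℕ) : Equiv.Perm (Fin n) :=
  if h : 1 ≤ i ∧ i < n then Equiv.swap ⟨i - 1, by omega⟩ ⟨i, h.2⟩ else 1

/-- Product of the word `l` of generator indices. -/
def wordProd (n : ℕ) (l : List ℕ) : Equiv.Perm (Fin n) :=
  (l.map (gen n)).prod

/-- Coxeter length of `w ∈ S_n`. -/
noncomputable def len (n : ℕ) (w : Equiv.Perm (Fin n)) : ℕ :=
  sInf {r | ∃ l : List ℕ, (∀ i ∈ l, 1 ≤ i ∧ i < n) ∧ wordProd n l = w ∧ l.length = r}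

/-- `l` is a reduced word for `w`. -/
def IsReducedWord (n : ℕ) (w : Equiv.Perm (Fin n)) (l : List ℕ) : Prop :=
  (∀ i ∈ l, 1 ≤ i ∧ i < n) ∧ wordProd n l = w ∧ l.length = len n w

/-- Bruhat-Chevalley order: `x ≤ w` iff every reduced word for `w` contains a
subword whose product is `x`. -/
def Bruhat (n : ℕ) (x w : Equiv.Perm (Fin n)) : Prop :=
  ∀ l, IsReducedWord n w l → ∃ t, t.Sublist l ∧ wordProd n t = x

/-- `w` is 321-avoiding: no `i < j < k` with `w i > w j > w k`. -/
def Avoids321 (n : ℕ) (w : Equiv.Perm (Fin n)) : Prop :=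
  ¬ ∃ i j k : Fin n, i < j ∧ j < k ∧ w j < w i ∧ w k < w j

/-- Product of the subword of `l` selected by the mask `S` (set of selected positions). -/
def maskProd (n : ℕ) (l : List ℕ) (S : Finset ℕ) : Equiv.Perm (Fin n) :=
  wordProd n (((List.range l.length).filter (fun j => decide (j ∈ S))).map (fun j => l.getD j 0))

/-- Position `j` of the word `l` is a defect of the mask `S`. -/
noncomputable def IsDefect (n : ℕ) (l : List ℕ) (S : Finset ℕ) (j : ℕ) : Prop :=
  len n (maskProd n (l.take j) S * gen n (l.getD j 0)) < len n (maskProd n (l.take j) S)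

/-- The defect set `D(σ)` of the mask `S` on the word `l`. -/
noncomputable def defectSet (n : ℕ) (l : List ℕ) (S : Finset ℕ) : Finset ℕ :=
  (Finset.range l.length).filter (fun j =>
    len n (maskProd n (l.take j) S * gen n (l.getD j 0)) < len n (maskProd n (l.take j) S))

/-- Deodhar's defect generating polynomial `P_x(a) = Σ_{σ : π(w^σ) = x} q^{|D(σ)|}`. -/
noncomputable def defPoly (n : ℕ) (l : List ℕ) (x : Equiv.Perm (Fin n)) : Polynomial ℤ :=
  ∑ S ∈ (Finset.range l.length).powerset,
    if maskProd n l S = x then (X : Polynomial ℤ) ^ (defectSet n l S).card else 0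


/-- The mask on a word of length `r` that deselects exactly positions `p+1` and `p+2`. -/
def braidMask (r p : ℕ) : Finset ℕ := ((Finset.range r).erase (p + 1)).erase (p + 2)

section Helpers

lemma getD_take (l : List ℕ) (n i : ℕ) (h : i < n) : (l.take n).getD i 0 = l.getD i 0 := by
  simp [List.getD, List.getElem?_take, h]

lemma getD_append_r (l₁ l₂ : List ℕ) (n : ℕ) (h : l₁.length ≤ n) :
    (l₁ ++ l₂).getD n 0 = l₂.getD (n - l₁.length) 0 := by
  simp [List.getD, List.getElem?_append_right h]

lemma map_getD_range (l : List ℕ) (j : ℕ) (h : j ≤ l.length) :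
    (List.map (fun k => l.getD k 0) (List.range j)) = l.take j := by
  apply List.ext_getElem
  · simp [h]
  · intro k h1 h2
    simp only [List.getElem_map, List.getElem_range, List.getElem_take]
    simp at h1
    rw [List.getD_eq_getElem l 0 (by omega)]

lemma gen_mul_self (n c : ℕ) : gen n c * gen n c = 1 := by
  unfold gen; split
  · exact Equiv.swap_mul_self _ _
  · simp

lemma sign_gen (n c : ℕ) (h : 1 ≤ c ∧ c < n) : Equiv.Perm.sign (gen n c) = -1 := by
  unfold gen; rw [dif_pos h]
  apply Equiv.Perm.sign_swap
  intro he
  have := congrArg Fin.val he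
  simp at this; omega

lemma wordProd_append (n : ℕ) (a b : List ℕ) :
    wordProd n (a ++ b) = wordProd n a * wordProd n b := by
  unfold wordProd; rw [List.map_append, List.prod_append]

lemma wordProd_concat (n : ℕ) (a : List ℕ) (c : ℕ) :
    wordProd n (a ++ [c]) = wordProd n a * gen n c := by
  rw [wordProd_append]; unfold wordProd; simp

lemma len_le (n : ℕ) (l : List ℕ) (hv : ∀ i ∈ l, 1 ≤ i ∧ i < n) :
    len n (wordProd n l) ≤ l.length :=
  Nat.sInf_le ⟨l, hv, rfl, rfl⟩

lemma len_spec (n : ℕ) (l : List ℕ) (hv : ∀ i ∈ l, 1 ≤ i ∧ i < n) :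
    ∃ t : List ℕ, (∀ i ∈ t, 1 ≤ i ∧ i < n) ∧ wordProd n t = wordProd n l ∧
      t.length = len n (wordProd n l) := by
  have hne : {r | ∃ t : List ℕ, (∀ i ∈ t, 1 ≤ i ∧ i < n) ∧ wordProd n t = wordProd n l ∧
      t.length = r}.Nonempty := ⟨l.length, l, hv, rfl, rfl⟩
  exact Nat.sInf_mem hne

lemma sign_wordProd (n : ℕ) (l : List ℕ) (hv : ∀ i ∈ l, 1 ≤ i ∧ i < n) :
    Equiv.Perm.sign (wordProd n l) = (-1) ^ l.length := by
  induction l with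
  | nil => simp [wordProd]
  | cons c t ih =>
    have h : wordProd n (c :: t) = gen n c * wordProd n t := by
      unfold wordProd; simp
    rw [h, map_mul, sign_gen n c (hv c (by simp)), ih (fun k hk => hv k (by simp [hk]))]
    rw [List.length_cons, pow_succ, mul_comm]

lemma sign_len (n : ℕ) (l : List ℕ) (hv : ∀ i ∈ l, 1 ≤ i ∧ i < n) :
    ((-1 : ℤˣ)) ^ (len n (wordProd n l)) = (-1) ^ l.length := by
  obtain ⟨t, htv, hte, htl⟩ := len_spec n l hv
  rw [← htl, ← sign_wordProd n t htv, hte, sign_wordProd n l hv]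

lemma valid_concat (n : ℕ) (l : List ℕ) (c : ℕ) (hv : ∀ i ∈ l, 1 ≤ i ∧ i < n)
    (hc : 1 ≤ c ∧ c < n) : ∀ i ∈ l ++ [c], 1 ≤ i ∧ i < n := by
  intro k hk; rcases List.mem_append.1 hk with h | h
  · exact hv k h
  · simp at h; subst h; exact hc

lemma len_mul_gen_le (n : ℕ) (l : List ℕ) (c : ℕ) (hv : ∀ i ∈ l, 1 ≤ i ∧ i < n)
    (hc : 1 ≤ c ∧ c < n) :
    len n (wordProd n l * gen n c) ≤ len n (wordProd n l) + 1 := by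
  obtain ⟨t, htv, hte, htl⟩ := len_spec n l hv
  have h : wordProd n l * gen n c = wordProd n (t ++ [c]) := by
    rw [wordProd_concat, hte]
  rw [h]
  calc len n (wordProd n (t ++ [c])) ≤ (t ++ [c]).length :=
        len_le n _ (valid_concat n t c htv hc)
    _ = len n (wordProd n l) + 1 := by simp [htl]

lemma len_mul_gen_ge (n : ℕ) (l : List ℕ) (c : ℕ) (hv : ∀ i ∈ l, 1 ≤ i ∧ i < n)
    (hc : 1 ≤ c ∧ c < n) :
    len n (wordProd n l) ≤ len n (wordProd n l * gen n c) + 1 := by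
  have h1 := len_mul_gen_le n (l ++ [c]) c (valid_concat n l c hv hc) hc
  rw [wordProd_concat, mul_assoc, gen_mul_self, mul_one] at h1
  exact h1

lemma len_mul_gen_ne (n : ℕ) (l : List ℕ) (c : ℕ) (hv : ∀ i ∈ l, 1 ≤ i ∧ i < n)
    (hc : 1 ≤ c ∧ c < n) :
    len n (wordProd n l * gen n c) ≠ len n (wordProd n l) := by
  intro he
  have h1 := sign_len n l hv
  have h2 := sign_len n (l ++ [c]) (valid_concat n l c hv hc)
  rw [wordProd_concat] at h2
  rw [he, h1] at h2
  simp [pow_succ] at h2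

lemma reduced_prefix (n : ℕ) (t u : List ℕ)
    (hv : ∀ i ∈ t ++ u, 1 ≤ i ∧ i < n)
    (hlen : (t ++ u).length = len n (wordProd n (t ++ u))) :
    len n (wordProd n t) = t.length := by
  have hvt : ∀ i ∈ t, 1 ≤ i ∧ i < n := fun k hk => hv k (List.mem_append.2 (Or.inl hk))
  have hvu : ∀ i ∈ u, 1 ≤ i ∧ i < n := fun k hk => hv k (List.mem_append.2 (Or.inr hk))
  have h1 := len_le n t hvt
  by_contra hne
  have hlt : len n (wordProd n t) < t.length := lt_of_le_of_ne h1 hne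
  obtain ⟨t', ht'v, ht'e, ht'l⟩ := len_spec n t hvt
  have he : wordProd n (t' ++ u) = wordProd n (t ++ u) := by
    rw [wordProd_append, ht'e, ← wordProd_append]
  have h2 : len n (wordProd n (t ++ u)) ≤ (t' ++ u).length := by
    rw [← he]
    exact len_le n _ (fun k hk => by
      rcases List.mem_append.1 hk with h | h
      · exact ht'v k h
      · exact hvu k h)
  simp only [List.length_append] at h2 hlen
  omega

lemma maskProd_take (n : ℕ) (l : List ℕ) (S : Finset ℕ) (j : ℕ) (hj : j ≤ l.length) :
    maskProd n (l.take j) S =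
      wordProd n (((List.range j).filter (fun k => decide (k ∈ S))).map
        (fun k => l.getD k 0)) := by
  unfold maskProd
  rw [List.length_take, Nat.min_eq_left hj]
  congr 1
  apply List.map_congr_left
  intro k hk
  have hk' : k < j := by simpa using (List.mem_filter.1 hk).1
  exact getD_take l j k hk'

lemma maskWord_succ (l : List ℕ) (S : Finset ℕ) (j : ℕ) :
    ((List.range (j+1)).filter (fun k => decide (k ∈ S))).map (fun k => l.getD k 0) =
    (((List.range j).filter (fun k => decide (k ∈ S))).map (fun k => l.getD k 0)) ++
      (if j ∈ S then [l.getD j 0] else []) := by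
  rw [List.range_succ, List.filter_append, List.map_append]
  congr 1
  by_cases h : j ∈ S <;> simp [h]

lemma mask_len_ge (n : ℕ) (l : List ℕ) (S : Finset ℕ)
    (hv : ∀ i ∈ l, 1 ≤ i ∧ i < n) :
    ∀ j, j ≤ l.length →
      ((Finset.range j).filter (fun k => k ∈ S)).card ≤
        len n (wordProd n (((List.range j).filter (fun k => decide (k ∈ S))).map
          (fun k => l.getD k 0)))
        + 2 * ((Finset.range j).filter (fun k => k ∈ S ∧
            len n (maskProd n (l.take k) S * gen n (l.getD k 0)) <
              len n (maskProd n (l.take k) S))).card := by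
  intro j
  induction j with
  | zero => simp
  | succ j ih =>
    intro hj
    have hj' : j ≤ l.length := by omega
    have ihj := ih hj'
    set c := l.getD j 0 with hc
    have hcl : c ∈ l := by
      rw [hc, List.getD_eq_getElem l 0 (by omega)]; exact List.getElem_mem _
    have hcv : 1 ≤ c ∧ c < n := hv c hcl
    set W := ((List.range j).filter (fun k => decide (k ∈ S))).map (fun k => l.getD k 0)
      with hWd
    have hWv : ∀ m ∈ W, 1 ≤ m ∧ m < n := by
      intro m hm
      simp only [hWd, List.mem_map] at hm
      obtain ⟨a, ha, rfl⟩ := hm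
      have haj : a < j := by simpa using (List.mem_filter.1 ha).1
      have : l.getD a 0 ∈ l := by
        rw [List.getD_eq_getElem l 0 (by omega)]; exact List.getElem_mem _
      exact hv _ this
    have hmp : maskProd n (l.take j) S = wordProd n W := maskProd_take n l S j hj'
    rw [maskWord_succ l S j, Finset.range_add_one, Finset.filter_insert, Finset.filter_insert]
    by_cases hjS : j ∈ S
    · rw [if_pos hjS, Finset.card_insert_of_notMem (by simp)]
      rw [wordProd_append, ← hWd, ← hc]
      have hgeq : wordProd n (if j ∈ S then [c] else []) = gen n c := by
        rw [if_pos hjS]; unfold wordProd; simp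
      rw [hgeq]
      have hge := len_mul_gen_ge n W c hWv hcv
      have hne := len_mul_gen_ne n W c hWv hcv
      by_cases hd : len n (maskProd n (l.take j) S * gen n c) < len n (maskProd n (l.take j) S)
      · rw [if_pos ⟨hjS, hd⟩, Finset.card_insert_of_notMem (by simp)]
        rw [hmp] at hd
        omega
      · have hnd : ¬(j ∈ S ∧ len n (maskProd n (l.take j) S * gen n c) <
            len n (maskProd n (l.take j) S)) := fun h => hd h.2
        rw [if_neg hnd]
        rw [hmp] at hd
        have : len n (wordProd n W) ≤ len n (wordProd n W * gen n c) := by omega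
        omega
    · have hnd : ¬(j ∈ S ∧ len n (maskProd n (l.take j) S * gen n c) <
          len n (maskProd n (l.take j) S)) := fun h => hjS h.1
      rw [if_neg hjS.elim, if_neg hnd]
      rw [show ((if j ∈ S then [l.getD j 0] else []) : List ℕ) = [] from by simp [hjS],
        List.append_nil, ← hWd]
      exact ihj

end Helpers

/-- for a non-321-avoiding `w` with reduced word `v s_i s_{i±1} s_i v'`, the
mask selecting everything except the middle `s_{i±1}` and the second `s_i` has exactly one
0-defect and exactly two zeros, hence `Δ_σ < 0`, i.e. `|D(σ)| > (ℓ(w) - ℓ(π(w^σ)) - 1)/2`. -/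


theorem stmt11 (n : ℕ) (w : Equiv.Perm (Fin n)) (v v' : List ℕ) (i i' : ℕ)
    (hbraid : i' = i + 1 ∨ i = i' + 1)
    (hl : IsReducedWord n w (v ++ i :: i' :: i :: v')) :
    ((defectSet n (v ++ i :: i' :: i :: v')
          (braidMask (v ++ i :: i' :: i :: v').length v.length)).filter
        (fun j => j ∉ braidMask (v ++ i :: i' :: i :: v').length v.length)).card = 1 ∧
    ((Finset.range (v ++ i :: i' :: i :: v').length).filter
        (fun j => j ∉ braidMask (v ++ i :: i' :: i :: v').length v.length)).card = 2 ∧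
    ((len n w : ℚ) -
        (len n (maskProd n (v ++ i :: i' :: i :: v')
          (braidMask (v ++ i :: i' :: i :: v').length v.length)) : ℚ) - 1) / 2 <
      ((defectSet n (v ++ i :: i' :: i :: v')
          (braidMask (v ++ i :: i' :: i :: v').length v.length)).card : ℚ) := by
  obtain ⟨hv, hwp, hlen⟩ := hl
  set l : List ℕ := v ++ i :: i' :: i :: v' with hld
  set p : ℕ := v.length with hpd
  set r : ℕ := l.length with hrd
  set S : Finset ℕ := braidMask r p with hSd
  have hr : r = p + (v'.length + 3) := by
    simp [hrd, hld, List.length_append]; rfl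
  have hmemS : ∀ k, k ∈ S ↔ k < r ∧ k ≠ p + 1 ∧ k ≠ p + 2 := by
    intro k
    simp only [hSd, braidMask, Finset.mem_erase, Finset.mem_range]
    tauto
  -- letter validity
  have hvi : 1 ≤ i ∧ i < n := hv i (by simp [hld])
  have hvi' : 1 ≤ i' ∧ i' < n := hv i' (by simp [hld])
  -- reduced prefixes
  have hlen0 : ∀ t u : List ℕ, t ++ u = l → len n (wordProd n t) = t.length := by
    intro t u h
    apply reduced_prefix n t u (h ▸ hv)
    rw [h, hwp, ← hlen]
  have hlen_v : len n (wordProd n v) = p := hlen0 v (i :: i' :: i :: v') rfl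
  have hlen_vi : len n (wordProd n (v ++ [i])) = p + 1 := by
    have := hlen0 (v ++ [i]) (i' :: i :: v') (by simp [hld])
    simpa using this
  have hlen_vii' : len n (wordProd n (v ++ [i, i'])) = p + 2 := by
    have := hlen0 (v ++ [i, i']) (i :: v') (by simp [hld])
    simpa using this
  -- take computations
  have htake1 : l.take (p + 1) = v ++ [i] := by
    rw [hld, List.take_append]
    have h1 : v.take (p + 1) = v := List.take_of_length_le (by omega)
    rw [h1]
    congr 1
    have : p + 1 - v.length = 1 := by omega
    rw [this]
    rfl
  -- filters of ranges
  have hfil1 : ∀ m, m ≤ p + 1 → (List.range m).filter (fun k => decide (k ∈ S)) =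
      List.range m := by
    intro m hm
    apply List.filter_eq_self.mpr
    intro a ha
    have haa : a < m := List.mem_range.mp ha
    have : a ∈ S := (hmemS a).mpr ⟨by omega, by omega, by omega⟩
    simpa using this
  have hp1S : (p + 1) ∉ S := by
    rw [hmemS]; tauto
  have hp2S : (p + 2) ∉ S := by
    rw [hmemS]; tauto
  -- masked prefix products
  have hmA : maskProd n (l.take (p + 1)) S = wordProd n (v ++ [i]) := by
    rw [maskProd_take n l S (p + 1) (by omega), hfil1 (p + 1) le_rfl,
      map_getD_range l (p + 1) (by omega), htake1]
  have hmB : maskProd n (l.take (p + 2)) S = wordProd n (v ++ [i]) := by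
    rw [maskProd_take n l S (p + 2) (by omega)]
    have hfe : (List.range (p + 2)).filter (fun k => decide (k ∈ S)) =
        List.range (p + 1) := by
      rw [show p + 2 = (p + 1) + 1 from rfl, List.range_succ, List.filter_append,
        hfil1 (p + 1) le_rfl]
      simp [hp1S]
    rw [hfe, map_getD_range l (p + 1) (by omega), htake1]
  -- letters at positions p+1, p+2
  have hgd1 : l.getD (p + 1) 0 = i' := by
    rw [hld, getD_append_r v _ (p + 1) (by omega)]
    have : p + 1 - v.length = 1 := by omega
    rw [this]
    simp [List.getD]
  have hgd2 : l.getD (p + 2) 0 = i := by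
    rw [hld, getD_append_r v _ (p + 2) (by omega)]
    have : p + 2 - v.length = 2 := by omega
    rw [this]
    simp [List.getD]
  -- p+1 is not a defect
  have hnd1 : ¬ (len n (maskProd n (l.take (p + 1)) S * gen n (l.getD (p + 1) 0)) <
      len n (maskProd n (l.take (p + 1)) S)) := by
    rw [hmA, hgd1, ← wordProd_concat]
    have he : (v ++ [i]) ++ [i'] = v ++ [i, i'] := by simp
    rw [he, hlen_vii', hlen_vi]
    omega
  -- p+2 is a defect
  have hd2 : len n (maskProd n (l.take (p + 2)) S * gen n (l.getD (p + 2) 0)) <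
      len n (maskProd n (l.take (p + 2)) S) := by
    rw [hmB, hgd2, wordProd_concat, mul_assoc, gen_mul_self, mul_one, hlen_v, ← wordProd_concat, hlen_vi]
    omega
  have hp1r : p + 1 < r := by omega
  have hp2r : p + 2 < r := by omega
  -- Part 1
  have hD0 : (defectSet n l S).filter (fun j => j ∉ S) = {p + 2} := by
    ext j
    simp only [defectSet, Finset.mem_filter, Finset.mem_range, Finset.mem_singleton]
    constructor
    · rintro ⟨⟨hjr, hjd⟩, hjS⟩
      have : j = p + 1 ∨ j = p + 2 := by
        by_contra hcon
        push_neg at hcon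
        exact hjS ((hmemS j).mpr ⟨hjr, hcon.1, hcon.2⟩)
      rcases this with h | h
      · exact absurd (h ▸ hjd) hnd1
      · exact h
    · rintro rfl
      exact ⟨⟨hp2r, hd2⟩, hp2S⟩
  have part1 : ((defectSet n l S).filter (fun j => j ∉ S)).card = 1 := by
    rw [hD0]; rfl
  -- Part 2
  have hZ : (Finset.range r).filter (fun j => j ∉ S) = {p + 1, p + 2} := by
    ext j
    simp only [Finset.mem_filter, Finset.mem_range, Finset.mem_insert, Finset.mem_singleton]
    constructor
    · rintro ⟨hjr, hjS⟩
      by_contra hcon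
      push_neg at hcon
      exact hjS ((hmemS j).mpr ⟨hjr, hcon.1, hcon.2⟩)
    · rintro (rfl | rfl)
      · exact ⟨hp1r, hp1S⟩
      · exact ⟨hp2r, hp2S⟩
  have part2 : ((Finset.range r).filter (fun j => j ∉ S)).card = 2 := by
    rw [hZ]
    rw [Finset.card_insert_of_notMem (by simp), Finset.card_singleton]
  -- Part 3
  have hcards : ((Finset.range r).filter (fun k => k ∈ S)).card = r - 2 := by
    have hsum := Finset.card_filter_add_card_filter_not
      (s := Finset.range r) (p := fun k => k ∈ S)
    rw [Finset.card_range] at hsum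
    have h2 : ((Finset.range r).filter (fun j => ¬ (j ∈ S))).card = 2 := part2
    omega
  have hind := mask_len_ge n l S hv r le_rfl
  have hmx : maskProd n l S =
      wordProd n (((List.range r).filter (fun k => decide (k ∈ S))).map
        (fun k => l.getD k 0)) := by
    have := maskProd_take n l S r le_rfl
    rwa [List.take_length] at this
  rw [← hmx] at hind
  have hdsplit : (defectSet n l S).card =
      ((defectSet n l S).filter (fun k => k ∈ S)).card + 1 := by
    have hsum := Finset.card_filter_add_card_filter_not
      (s := defectSet n l S) (p := fun k => k ∈ S)
    have h1 : ((defectSet n l S).filter (fun j => ¬ (j ∈ S))).card = 1 := part1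
    omega
  have hfcomm : (Finset.range r).filter (fun k => k ∈ S ∧
      len n (maskProd n (l.take k) S * gen n (l.getD k 0)) <
        len n (maskProd n (l.take k) S)) = (defectSet n l S).filter (fun k => k ∈ S) := by
    ext k
    simp only [defectSet, Finset.mem_filter, Finset.mem_range]
    tauto
  rw [hfcomm, hcards] at hind
  -- key inequality : r ≤ len x + 2 * |D|
  have hkey : r ≤ len n (maskProd n l S) + 2 * (defectSet n l S).card := by omega
  have hlw : len n w = r := hlen.symm
  refine ⟨part1, part2, ?_⟩
  rw [hlw, div_lt_iff₀ (by norm_num : (0 : ℚ) < 2)]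
  have hq : (r : ℚ) ≤ (len n (maskProd n l S) : ℚ) + 2 * ((defectSet n l S).card : ℚ) := by
    exact_mod_cast hkey
  linarith
end

section
/- The number of 321-avoiding permutations in S_n equals the n-th Catalan number C_n = (1/(n+1))·binom(2n, n). -/
open Polynomial

namespace Stmt15Aux
open Finset

variable {n : ℕ}

lemma avoids_exc_mono {w : Equiv.Perm (Fin n)} (hw : Avoids321 n w) {i j : Fin n}
    (hij : i < j) (hi : i < w i) (hj : j < w j) : w i < w j := by
  by_contra hlt
  have hne : w j ≠ w i := fun h => absurd (w.injective h) (ne_of_gt hij)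
  have hji : w j < w i := lt_of_le_of_ne (not_lt.mp hlt) hne
  have hex : ∃ k, j < k ∧ w k < w j := by
    by_contra hk
    push_neg at hk
    have hcard : (insert i (Ici j)).card ≤ (Ici (w j)).card := by
      apply Finset.card_le_card_of_injOn w
      · intro x hx
        rcases Finset.mem_insert.mp hx with rfl | hx
        · exact Finset.mem_Ici.mpr hji.le
        · rcases eq_or_lt_of_le (Finset.mem_Ici.mp hx) with rfl | h
          · exact Finset.mem_Ici.mpr le_rfl
          · exact Finset.mem_Ici.mpr (hk x h)
      · exact w.injective.injOn
    rw [Finset.card_insert_of_notMem (fun h => absurd (Finset.mem_Ici.mp h) (not_le.mpr hij)),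
      Fin.card_Ici, Fin.card_Ici] at hcard
    have h1 : (j : ℕ) < (w j : ℕ) := hj
    have h2 : (w j : ℕ) < n := (w j).isLt
    have h3 : (j : ℕ) < n := j.isLt
    omega
  obtain ⟨k, hk1, hk2⟩ := hex
  exact hw ⟨i, j, k, hij, hk1, hji, hk2⟩

lemma avoids_def_mono {w : Equiv.Perm (Fin n)} (hw : Avoids321 n w) {i j : Fin n}
    (hij : i < j) (hi : w i ≤ i) (hj : w j ≤ j) : w i < w j := by
  by_contra hlt
  have hne : w j ≠ w i := fun h => absurd (w.injective h) (ne_of_gt hij)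
  have hji : w j < w i := lt_of_le_of_ne (not_lt.mp hlt) hne
  have hex : ∃ k, k < i ∧ w i < w k := by
    by_contra hk
    push_neg at hk
    have hcard : (insert j (Iic i)).card ≤ (Iic (w i)).card := by
      apply Finset.card_le_card_of_injOn w
      · intro x hx
        rcases Finset.mem_insert.mp hx with rfl | hx
        · exact Finset.mem_Iic.mpr hji.le
        · rcases eq_or_lt_of_le (Finset.mem_Iic.mp hx) with rfl | h
          · exact Finset.mem_Iic.mpr le_rfl
          · exact Finset.mem_Iic.mpr (hk x h)
      · exact w.injective.injOn
    rw [Finset.card_insert_of_notMem (fun h => absurd (Finset.mem_Iic.mp h) (not_le.mpr hij)),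
      Fin.card_Iic, Fin.card_Iic] at hcard
    have h1 : (w i : ℕ) ≤ (i : ℕ) := hi
    omega
  obtain ⟨k, hk1, hk2⟩ := hex
  exact hw ⟨k, i, j, hk1, hij, hk2, hji⟩

section Dom
variable {α : Type*} [LinearOrder α]

lemma emb_orderIso_symm (S : Finset α) {k : ℕ} (hS : S.card = k) (x : α) (hx : x ∈ S) :
    S.orderEmbOfFin hS ((S.orderIsoOfFin hS).symm ⟨x, hx⟩) = x := by
  rw [← Finset.coe_orderIsoOfFin_apply, OrderIso.apply_symm_apply]

lemma card_filter_le_emb (S : Finset α) {k : ℕ} (hS : S.card = k) (j : Fin k) :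
    (j : ℕ) + 1 ≤ (S.filter (· ≤ S.orderEmbOfFin hS j)).card := by
  classical
  have := Finset.card_le_card_of_injOn
    (f := fun i : Fin ((j : ℕ) + 1) => S.orderEmbOfFin hS ⟨(i : ℕ), lt_of_le_of_lt (Nat.lt_succ_iff.mp i.isLt) j.isLt⟩)
    (s := Finset.univ) (t := S.filter (· ≤ S.orderEmbOfFin hS j)) ?_ ?_
  · simpa using this
  · intro i _
    refine Finset.mem_filter.mpr ⟨Finset.orderEmbOfFin_mem _ _ _, ?_⟩
    exact (S.orderEmbOfFin hS).monotone (by exact Fin.mk_le_of_le_val (Nat.lt_succ_iff.mp i.isLt))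
  · intro a _ b _ hab
    have h' := (S.orderEmbOfFin hS).injective hab
    have h'' : (a : ℕ) = (b : ℕ) := by simpa using h'
    exact Fin.ext h''

lemma card_filter_lt_emb (S : Finset α) {k : ℕ} (hS : S.card = k) (j : Fin k) :
    (S.filter (· < S.orderEmbOfFin hS j)).card ≤ (j : ℕ) := by
  classical
  have := Finset.card_le_card_of_injOn
    (f := fun x => if hx : x ∈ S then (S.orderIsoOfFin hS).symm ⟨x, hx⟩ else j)
    (s := S.filter (· < S.orderEmbOfFin hS j)) (t := Finset.Iio j) ?_ ?_
  · rwa [Fin.card_Iio] at this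
  · intro x hx
    obtain ⟨hxS, hxlt⟩ := Finset.mem_filter.mp hx
    dsimp only
    rw [dif_pos hxS, Finset.mem_coe, Finset.mem_Iio]
    by_contra hge
    have : S.orderEmbOfFin hS j ≤ S.orderEmbOfFin hS ((S.orderIsoOfFin hS).symm ⟨x, hxS⟩) :=
      (S.orderEmbOfFin hS).monotone (not_lt.mp hge)
    rw [emb_orderIso_symm] at this
    exact absurd hxlt (not_lt.mpr this)
  · intro x hx y hy hxy
    obtain ⟨hxS, _⟩ := Finset.mem_filter.mp hx
    obtain ⟨hyS, _⟩ := Finset.mem_filter.mp hy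
    dsimp only at hxy
    rw [dif_pos hxS, dif_pos hyS] at hxy
    have := (S.orderIsoOfFin hS).symm.injective hxy
    exact Subtype.mk_eq_mk.mp this

lemma dom_lt {S T : Finset α} {k : ℕ} (hS : S.card = k) (hT : T.card = k)
    (hc : ∀ t : α, (T.filter (· ≤ t)).card ≤ (S.filter (· < t)).card) (j : Fin k) :
    S.orderEmbOfFin hS j < T.orderEmbOfFin hT j := by
  by_contra hle
  have h1 := card_filter_le_emb T hT j
  have h2 := card_filter_lt_emb S hS j
  have h3 : (T.filter (· ≤ T.orderEmbOfFin hT j)).card ≤ (T.filter (· ≤ S.orderEmbOfFin hS j)).card := by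
    apply Finset.card_le_card
    intro x hx
    rw [Finset.mem_filter] at hx ⊢
    exact ⟨hx.1, le_trans hx.2 (not_lt.mp hle)⟩
  have h4 := hc (S.orderEmbOfFin hS j)
  omega

lemma dom_le {S T : Finset α} {k : ℕ} (hS : S.card = k) (hT : T.card = k)
    (hc : ∀ t : α, (T.filter (· ≤ t)).card ≤ (S.filter (· ≤ t)).card) (j : Fin k) :
    S.orderEmbOfFin hS j ≤ T.orderEmbOfFin hT j := by
  by_contra hlt
  have h1 := card_filter_le_emb T hT j
  have h2 := card_filter_lt_emb S hS j
  have h4 := hc (T.orderEmbOfFin hT j)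
  have h3 : (S.filter (· ≤ T.orderEmbOfFin hT j)).card ≤
      (S.filter (· < S.orderEmbOfFin hS j)).card := by
    apply Finset.card_le_card
    intro x hx
    rw [Finset.mem_filter] at hx ⊢
    exact ⟨hx.1, lt_of_le_of_lt hx.2 (not_le.mp hlt)⟩
  omega

end Dom

/-- The domination condition on a pair of subsets. -/
def Cond (n : ℕ) (A B : Finset (Fin n)) : Prop :=
  A.card = B.card ∧ ∀ t : Fin n, (B.filter (· ≤ t)).card ≤ (A.filter (· < t)).card

lemma compl_card_eq {A B : Finset (Fin n)} (h : A.card = B.card) : Aᶜ.card = Bᶜ.card := by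
  rw [Finset.card_compl, Finset.card_compl, h]

/-- The fill function: send the `j`-th element of `A` to the `j`-th element of `B`,
and the `j`-th element of `Aᶜ` to the `j`-th element of `Bᶜ`. -/
def fillFun (A B : Finset (Fin n)) (h : A.card = B.card) : Fin n → Fin n := fun i =>
  if hi : i ∈ A then B.orderEmbOfFin h.symm ((A.orderIsoOfFin rfl).symm ⟨i, hi⟩)
  else Bᶜ.orderEmbOfFin (compl_card_eq h).symm
    ((Aᶜ.orderIsoOfFin rfl).symm ⟨i, Finset.mem_compl.mpr hi⟩)

lemma fillFun_mem {A B : Finset (Fin n)} (h : A.card = B.card) {i : Fin n} (hi : i ∈ A) :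
    fillFun A B h i ∈ B := by
  rw [fillFun, dif_pos hi]; exact Finset.orderEmbOfFin_mem _ _ _

lemma fillFun_not_mem {A B : Finset (Fin n)} (h : A.card = B.card) {i : Fin n} (hi : i ∉ A) :
    fillFun A B h i ∉ B := by
  rw [fillFun, dif_neg hi]
  exact Finset.mem_compl.mp (Finset.orderEmbOfFin_mem _ _ _)

lemma fillFun_injective (A B : Finset (Fin n)) (h : A.card = B.card) :
    Function.Injective (fillFun A B h) := by
  intro x y hxy
  by_cases hx : x ∈ A <;> by_cases hy : y ∈ A
  · rw [fillFun, dif_pos hx, fillFun, dif_pos hy] at hxy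
    have := (A.orderIsoOfFin rfl).symm.injective ((B.orderEmbOfFin h.symm).injective hxy)
    exact Subtype.mk_eq_mk.mp this
  · exact absurd (fillFun_mem h hx) (hxy ▸ fillFun_not_mem h hy)
  · exact absurd (fillFun_mem h hy) (hxy ▸ fillFun_not_mem h hx)
  · rw [fillFun, dif_neg hx, fillFun, dif_neg hy] at hxy
    have := (Aᶜ.orderIsoOfFin rfl).symm.injective ((Bᶜ.orderEmbOfFin (compl_card_eq h).symm).injective hxy)
    exact Subtype.mk_eq_mk.mp this

/-- The fill permutation. -/
noncomputable def fill (A B : Finset (Fin n)) (h : A.card = B.card) : Equiv.Perm (Fin n) :=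
  Equiv.ofBijective (fillFun A B h)
    (Finite.injective_iff_bijective.mp (fillFun_injective A B h))

lemma fill_apply (A B : Finset (Fin n)) (h : A.card = B.card) (i : Fin n) :
    fill A B h i = fillFun A B h i := rfl

lemma fill_mono_mem {A B : Finset (Fin n)} (h : A.card = B.card) {i j : Fin n}
    (hi : i ∈ A) (hj : j ∈ A) (hij : i < j) : fill A B h i < fill A B h j := by
  rw [fill_apply, fill_apply, fillFun, dif_pos hi, fillFun, dif_pos hj]
  apply (B.orderEmbOfFin h.symm).strictMono
  apply (A.orderIsoOfFin rfl).symm.strictMono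
  exact Subtype.mk_lt_mk.mpr hij

lemma fill_mono_not_mem {A B : Finset (Fin n)} (h : A.card = B.card) {i j : Fin n}
    (hi : i ∉ A) (hj : j ∉ A) (hij : i < j) : fill A B h i < fill A B h j := by
  rw [fill_apply, fill_apply, fillFun, dif_neg hi, fillFun, dif_neg hj]
  apply (Bᶜ.orderEmbOfFin (compl_card_eq h).symm).strictMono
  apply (Aᶜ.orderIsoOfFin rfl).symm.strictMono
  exact Subtype.mk_lt_mk.mpr hij

lemma fill_avoids (A B : Finset (Fin n)) (h : A.card = B.card) :
    Avoids321 n (fill A B h) := by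
  rintro ⟨i, j, k, hij, hjk, h1, h2⟩
  by_cases hi : i ∈ A <;> by_cases hj : j ∈ A <;> by_cases hk : k ∈ A
  · exact absurd (fill_mono_mem h hi hj hij) (not_lt.mpr h1.le)
  · exact absurd (fill_mono_mem h hi hj hij) (not_lt.mpr h1.le)
  · exact absurd (fill_mono_mem h hi hk (hij.trans hjk)) (not_lt.mpr (h2.trans h1).le)
  · exact absurd (fill_mono_not_mem h hj hk hjk) (not_lt.mpr h2.le)
  · exact absurd (fill_mono_mem h hj hk hjk) (not_lt.mpr h2.le)
  · exact absurd (fill_mono_not_mem h hi hk (hij.trans hjk)) (not_lt.mpr (h2.trans h1).le)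
  · exact absurd (fill_mono_not_mem h hi hj hij) (not_lt.mpr h1.le)
  · exact absurd (fill_mono_not_mem h hi hj hij) (not_lt.mpr h1.le)

lemma fill_exc {A B : Finset (Fin n)} {h : A.card = B.card}
    (hc : ∀ t : Fin n, (B.filter (· ≤ t)).card ≤ (A.filter (· < t)).card)
    {i : Fin n} (hi : i ∈ A) : i < fill A B h i := by
  rw [fill_apply, fillFun, dif_pos hi]
  have := dom_lt (rfl : A.card = A.card) h.symm hc ((A.orderIsoOfFin rfl).symm ⟨i, hi⟩)
  rwa [emb_orderIso_symm] at this

lemma cond_compl {A B : Finset (Fin n)}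
    (hc : ∀ t : Fin n, (B.filter (· ≤ t)).card ≤ (A.filter (· < t)).card) :
    ∀ t : Fin n, (Aᶜ.filter (· ≤ t)).card ≤ (Bᶜ.filter (· ≤ t)).card := by
  intro t
  have split : ∀ S : Finset (Fin n),
      (S.filter (· ≤ t)).card + (Sᶜ.filter (· ≤ t)).card = (Finset.univ.filter (· ≤ t)).card := by
    intro S
    rw [← Finset.card_union_of_disjoint (Finset.disjoint_filter_filter disjoint_compl_right),
      ← Finset.filter_union, Finset.union_compl]
  have hA := split A
  have hB := split B
  have hAB : (B.filter (· ≤ t)).card ≤ (A.filter (· ≤ t)).card := by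
    refine le_trans (hc t) (Finset.card_le_card ?_)
    intro x hx
    rw [Finset.mem_filter] at hx ⊢
    exact ⟨hx.1, hx.2.le⟩
  omega

lemma fill_not_exc {A B : Finset (Fin n)} {h : A.card = B.card}
    (hc : ∀ t : Fin n, (B.filter (· ≤ t)).card ≤ (A.filter (· < t)).card)
    {i : Fin n} (hi : i ∉ A) : fill A B h i ≤ i := by
  rw [fill_apply, fillFun, dif_neg hi]
  have := dom_le (S := Bᶜ) (T := Aᶜ) (compl_card_eq h).symm rfl
    (fun t => cond_compl hc t) ((Aᶜ.orderIsoOfFin rfl).symm ⟨i, Finset.mem_compl.mpr hi⟩)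
  rwa [emb_orderIso_symm] at this

lemma fill_excSet {A B : Finset (Fin n)} {h : A.card = B.card}
    (hc : ∀ t : Fin n, (B.filter (· ≤ t)).card ≤ (A.filter (· < t)).card) :
    Finset.univ.filter (fun i => i < fill A B h i) = A := by
  ext i
  simp only [Finset.mem_filter, Finset.mem_univ, true_and]
  constructor
  · intro hlt
    by_contra hi
    exact absurd hlt (not_lt.mpr (fill_not_exc hc hi))
  · exact fun hi => fill_exc hc hi

lemma fill_image {A B : Finset (Fin n)} (h : A.card = B.card) :
    A.image (fill A B h) = B := by
  apply Finset.eq_of_subset_of_card_le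
  · intro x hx
    obtain ⟨a, ha, rfl⟩ := Finset.mem_image.mp hx
    exact fillFun_mem h ha
  · rw [Finset.card_image_of_injective _ (fill A B h).injective, h]


/-- Strict excedance set. -/
def excSet (w : Equiv.Perm (Fin n)) : Finset (Fin n) :=
  Finset.univ.filter (fun i => i < w i)

lemma excSet_card (w : Equiv.Perm (Fin n)) :
    (excSet w).card = ((excSet w).image w).card :=
  (Finset.card_image_of_injective _ w.injective).symm

lemma excSet_cond (w : Equiv.Perm (Fin n)) (t : Fin n) :
    (((excSet w).image w).filter (· ≤ t)).card ≤ ((excSet w).filter (· < t)).card := by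
  apply Finset.card_le_card_of_injOn w.symm
  · intro b hb
    obtain ⟨hbB, hbt⟩ := Finset.mem_filter.mp hb
    obtain ⟨a, ha, rfl⟩ := Finset.mem_image.mp hbB
    rw [Equiv.symm_apply_apply]
    have haw : a < w a := (Finset.mem_filter.mp ha).2
    exact Finset.mem_filter.mpr ⟨ha, lt_of_lt_of_le haw hbt⟩
  · exact w.symm.injective.injOn

lemma avoids_fill_eq {w : Equiv.Perm (Fin n)} (hw : Avoids321 n w) :
    fill (excSet w) ((excSet w).image w) (excSet_card w) = w := by
  set A := excSet w with hA
  set B := (excSet w).image w with hB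
  have hmemA : ∀ i : Fin n, i ∈ A ↔ i < w i := by
    intro i; simp [hA, excSet]
  have hwB : ∀ {i : Fin n}, i ∈ A → w i ∈ B := fun hi => Finset.mem_image_of_mem w hi
  have hwBc : ∀ {i : Fin n}, i ∉ A → w i ∉ B := by
    intro i hi hmem
    obtain ⟨a, ha, haa⟩ := Finset.mem_image.mp hmem
    exact hi ((w.injective haa) ▸ ha)
  have key1 : ∀ j : Fin A.card, w (A.orderEmbOfFin rfl j) = B.orderEmbOfFin (excSet_card w).symm j := by
    have := Finset.orderEmbOfFin_unique (excSet_card w).symm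
      (f := fun j : Fin A.card => w (A.orderEmbOfFin rfl j)) ?_ ?_
    · exact fun j => congrFun this j
    · exact fun x => hwB (Finset.orderEmbOfFin_mem _ _ _)
    · intro a b hab
      have h1 := (A.orderEmbOfFin rfl).strictMono hab
      exact avoids_exc_mono hw h1
        ((hmemA _).mp (Finset.orderEmbOfFin_mem _ _ _))
        ((hmemA _).mp (Finset.orderEmbOfFin_mem _ _ _))
  have key2 : ∀ j : Fin Aᶜ.card, w (Aᶜ.orderEmbOfFin rfl j)
      = Bᶜ.orderEmbOfFin (compl_card_eq (excSet_card w)).symm j := by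
    have := Finset.orderEmbOfFin_unique (compl_card_eq (excSet_card w)).symm
      (f := fun j : Fin Aᶜ.card => w (Aᶜ.orderEmbOfFin rfl j)) ?_ ?_
    · exact fun j => congrFun this j
    · intro x
      have : Aᶜ.orderEmbOfFin rfl x ∈ Aᶜ := Finset.orderEmbOfFin_mem _ _ _
      exact Finset.mem_compl.mpr (hwBc (Finset.mem_compl.mp this))
    · intro a b hab
      have h1 := (Aᶜ.orderEmbOfFin rfl).strictMono hab
      have h2 : ∀ y : Fin Aᶜ.card, w (Aᶜ.orderEmbOfFin rfl y) ≤ Aᶜ.orderEmbOfFin rfl y := by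
        intro y
        have : Aᶜ.orderEmbOfFin rfl y ∈ Aᶜ := Finset.orderEmbOfFin_mem _ _ _
        have := Finset.mem_compl.mp this
        rw [hmemA] at this
        exact not_lt.mp this
      exact avoids_def_mono hw h1 (h2 a) (h2 b)
  apply Equiv.ext
  intro i
  by_cases hi : i ∈ A
  · rw [fill_apply, fillFun, dif_pos hi]
    have hrec : A.orderEmbOfFin rfl ((A.orderIsoOfFin rfl).symm ⟨i, hi⟩) = i :=
      emb_orderIso_symm A rfl i hi
    rw [← key1, hrec]
  · rw [fill_apply, fillFun, dif_neg hi]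
    have hic : i ∈ Aᶜ := Finset.mem_compl.mpr hi
    have hrec : Aᶜ.orderEmbOfFin rfl ((Aᶜ.orderIsoOfFin rfl).symm ⟨i, hic⟩) = i :=
      emb_orderIso_symm Aᶜ rfl i hic
    rw [← key2, hrec]

/-- The equivalence between 321-avoiding permutations and dominated pairs. -/
noncomputable def permEquivPair :
    {w : Equiv.Perm (Fin n) // Avoids321 n w} ≃
    {AB : Finset (Fin n) × Finset (Fin n) // Cond n AB.1 AB.2} where
  toFun w := ⟨(excSet w.1, (excSet w.1).image w.1), excSet_card w.1, excSet_cond w.1⟩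
  invFun p := ⟨fill p.1.1 p.1.2 p.2.1, fill_avoids _ _ _⟩
  left_inv w := Subtype.ext (avoids_fill_eq w.2)
  right_inv p := by
    obtain ⟨⟨A, B⟩, hc⟩ := p
    apply Subtype.ext
    have h1 : excSet (fill A B hc.1) = A := fill_excSet hc.2
    rw [Prod.mk.injEq]
    refine ⟨h1, ?_⟩
    rw [h1, fill_image]


section Encode
open DyckStep List

lemma cUU : List.count U [U] = 1 := rfl
lemma cUD : List.count U [D] = 0 := rfl
lemma cDU : List.count D [U] = 0 := rfl
lemma cDD : List.count D [D] = 1 := rfl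

/-- block encoding of a pair of subsets as a word. -/
def encodeList (A B : Finset (Fin n)) : List DyckStep :=
  (List.finRange n).flatMap fun i => [if i ∈ B then D else U, if i ∈ A then U else D]

lemma flat2_getElem? {α β : Type*} (g : α → List β) (h2 : ∀ a, (g a).length = 2)
    (l : List α) : ∀ (q : ℕ) (hq : q < l.length) (r : ℕ) (hr : r < 2),
      (l.flatMap g)[2*q+r]? = (g (l[q]'hq))[r]? := by
  induction l with
  | nil => intro q hq; exact absurd hq (Nat.not_lt_zero q)
  | cons a tl ih =>
    intro q hq r hr
    rw [List.flatMap_cons]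
    cases q with
    | zero =>
      rw [List.getElem?_append_left (by rw [h2]; omega)]
      simp
    | succ q' =>
      rw [List.getElem?_append_right (by rw [h2]; omega)]
      have harith : 2*(q'+1)+r - (g a).length = 2*q'+r := by rw [h2]; omega
      rw [harith, List.getElem_cons_succ]
      exact ih q' (by simpa using hq) r hr

lemma encode_length (A B : Finset (Fin n)) : (encodeList A B).length = 2 * n := by
  rw [encodeList, List.length_flatMap]
  have hm : List.map (fun i : Fin n =>
      [if i ∈ B then D else U, if i ∈ A then U else D].length) (List.finRange n)
      = List.map (fun _ => 2) (List.finRange n) := List.map_congr_left (fun a _ => rfl)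
  rw [hm, List.map_const', List.sum_replicate, List.length_finRange, smul_eq_mul, Nat.mul_comm]

lemma encode_getElem?_even (A B : Finset (Fin n)) {q : ℕ} (hq : q < n) :
    (encodeList A B)[2*q]? = some (if (⟨q, hq⟩ : Fin n) ∈ B then D else U) := by
  have h := flat2_getElem? (fun i : Fin n => [if i ∈ B then D else U, if i ∈ A then U else D])
    (fun a => rfl) (List.finRange n) q (by simpa using hq) 0 (by omega)
  rw [encodeList, show 2*q = 2*q+0 from rfl, h, List.getElem_finRange]
  rfl

lemma encode_getElem?_odd (A B : Finset (Fin n)) {q : ℕ} (hq : q < n) :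
    (encodeList A B)[2*q+1]? = some (if (⟨q, hq⟩ : Fin n) ∈ A then U else D) := by
  have h := flat2_getElem? (fun i : Fin n => [if i ∈ B then D else U, if i ∈ A then U else D])
    (fun a => rfl) (List.finRange n) q (by simpa using hq) 1 (by omega)
  rw [encodeList, h, List.getElem_finRange]
  rfl

lemma filter_card_succ (S : Finset (Fin n)) {q : ℕ} (hq : q < n) :
    (S.filter (fun x => x.val < q+1)).card
      = (S.filter (fun x => x.val < q)).card + (if (⟨q, hq⟩ : Fin n) ∈ S then 1 else 0) := by
  split_ifs with h
  · have hins : S.filter (fun x => x.val < q+1)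
        = insert ⟨q, hq⟩ (S.filter (fun x => x.val < q)) := by
      ext x
      simp only [Finset.mem_insert, Finset.mem_filter]
      constructor
      · rintro ⟨hxS, hxlt⟩
        rcases Nat.lt_succ_iff_lt_or_eq.mp hxlt with h' | h'
        · exact Or.inr ⟨hxS, h'⟩
        · exact Or.inl (Fin.ext h')
      · rintro (rfl | ⟨hxS, hxlt⟩)
        · exact ⟨h, Nat.lt_succ_self q⟩
        · exact ⟨hxS, Nat.lt_succ_of_lt hxlt⟩
    rw [hins, Finset.card_insert_of_notMem (by simp [Finset.mem_filter])]
  · rw [add_zero]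
    apply congrArg Finset.card
    apply Finset.filter_congr
    intro x hx
    constructor
    · intro hlt
      rcases Nat.lt_succ_iff_lt_or_eq.mp hlt with h' | h'
      · exact h'
      · have hxq : x = ⟨q, hq⟩ := Fin.ext h'
        exact absurd (hxq ▸ hx) h
    · exact fun h' => Nat.lt_succ_of_lt h'

lemma take_odd (A B : Finset (Fin n)) {q : ℕ} (hq : q < n) :
    (encodeList A B).take (2*q+1) = (encodeList A B).take (2*q)
      ++ [if (⟨q, hq⟩ : Fin n) ∈ B then D else U] := by
  rw [List.take_succ, encode_getElem?_even A B hq]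
  rfl

lemma take_even_succ (A B : Finset (Fin n)) {q : ℕ} (hq : q < n) :
    (encodeList A B).take (2*(q+1)) = (encodeList A B).take (2*q+1)
      ++ [if (⟨q, hq⟩ : Fin n) ∈ A then U else D] := by
  rw [show 2*(q+1) = (2*q+1)+1 by ring, List.take_succ, encode_getElem?_odd A B hq]
  rfl

lemma encode_count (A B : Finset (Fin n)) :
    ∀ q, q ≤ n →
      ((encodeList A B).take (2*q)).count U + (B.filter (fun b => b.val < q)).card
        = q + (A.filter (fun a => a.val < q)).card ∧
      ((encodeList A B).take (2*q)).count D + (A.filter (fun a => a.val < q)).card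
        = q + (B.filter (fun b => b.val < q)).card := by
  intro q
  induction q with
  | zero => simp
  | succ q ih =>
    intro hq1
    have hqn : q < n := hq1
    obtain ⟨ihU, ihD⟩ := ih hqn.le
    rw [take_even_succ A B hqn, take_odd A B hqn]
    rw [filter_card_succ A hqn, filter_card_succ B hqn]
    by_cases hA : (⟨q, hqn⟩ : Fin n) ∈ A <;> by_cases hB : (⟨q, hqn⟩ : Fin n) ∈ B <;>
      [simp only [if_pos hA, if_pos hB]; simp only [if_pos hA, if_neg hB];
       simp only [if_neg hA, if_pos hB]; simp only [if_neg hA, if_neg hB]] <;>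
      simp only [List.count_append, cUU, cUD, cDU, cDD] <;> omega

lemma take_full (A B : Finset (Fin n)) : (encodeList A B).take (2*n) = encodeList A B :=
  List.take_of_length_le (encode_length A B).le

lemma filter_lt_top (S : Finset (Fin n)) : S.filter (fun x => x.val < n) = S :=
  Finset.filter_true_of_mem (fun x _ => x.isLt)

lemma filter_le_eq_lt_succ (S : Finset (Fin n)) (q : ℕ) :
    S.filter (fun x => x.val ≤ q) = S.filter (fun x => x.val < q+1) :=
  Finset.filter_congr (fun x _ => by omega)

lemma filter_le_fin (S : Finset (Fin n)) (t : Fin n) :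
    S.filter (· ≤ t) = S.filter (fun x => x.val ≤ t.val) :=
  Finset.filter_congr (fun x _ => Fin.le_def)

lemma filter_lt_fin (S : Finset (Fin n)) (t : Fin n) :
    S.filter (· < t) = S.filter (fun x => x.val < t.val) :=
  Finset.filter_congr (fun x _ => Fin.lt_def)

lemma filter_lt_mono (S : Finset (Fin n)) {q q' : ℕ} (h : q ≤ q') :
    (S.filter (fun x => x.val < q)).card ≤ (S.filter (fun x => x.val < q')).card := by
  apply Finset.card_le_card
  intro x hx
  rw [Finset.mem_filter] at hx ⊢
  exact ⟨hx.1, lt_of_lt_of_le hx.2 h⟩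

lemma encode_count_eq {A B : Finset (Fin n)} (hcond : Cond n A B) :
    (encodeList A B).count U = (encodeList A B).count D := by
  have h := encode_count A B n le_rfl
  rw [take_full, filter_lt_top, filter_lt_top] at h
  have := hcond.1
  omega

lemma encode_prefix {A B : Finset (Fin n)} (hcond : Cond n A B) (i : ℕ) :
    ((encodeList A B).take i).count D ≤ ((encodeList A B).take i).count U := by
  have hcn : ∀ q, (hq : q < n) → (B.filter (fun b => b.val ≤ q)).card
      ≤ (A.filter (fun a => a.val < q)).card := by
    intro q hq
    have h0 := hcond.2 ⟨q, hq⟩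
    rwa [filter_le_fin, filter_lt_fin] at h0
  have key : ∀ q, q ≤ n → ∀ r, r ≤ 1 → ((encodeList A B).take (2*q+r)).count D
      ≤ ((encodeList A B).take (2*q+r)).count U := by
    intro q hqn r hr
    obtain ⟨hU, hD⟩ := encode_count A B q hqn
    have hba : (B.filter (fun b => b.val < q)).card ≤ (A.filter (fun a => a.val < q)).card := by
      cases q with
      | zero => simp
      | succ q' =>
        have h1 := hcn q' hqn
        have h2 : (B.filter (fun b => b.val ≤ q')).card
            = (B.filter (fun b => b.val < q'+1)).card := by rw [filter_le_eq_lt_succ]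
        have h3 := filter_lt_mono A (q := q') (q' := q'+1) (by omega)
        omega
    rcases Nat.le_one_iff_eq_zero_or_eq_one.mp hr with rfl | rfl
    · simp only [Nat.add_zero]
      omega
    · rcases Nat.lt_or_ge q n with hq | hq
      · rw [take_odd A B hq]
        have h1 := hcn q hq
        rw [filter_le_eq_lt_succ, filter_card_succ B hq] at h1
        by_cases hB : (⟨q, hq⟩ : Fin n) ∈ B <;>
          [simp only [if_pos hB] at h1 ⊢; simp only [if_neg hB] at h1 ⊢] <;>
          simp only [List.count_append, cUU, cUD, cDU, cDD] <;> omega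
      · rw [List.take_of_length_le (by rw [encode_length]; omega)]
        have h5 := encode_count A B n le_rfl
        rw [take_full, filter_lt_top, filter_lt_top] at h5
        have hc := hcond.1
        omega
  rcases Nat.lt_or_ge i (2*n+2) with hi | hi
  · have hq : i / 2 ≤ n := by omega
    have h6 := key (i/2) hq (i % 2) (by omega)
    rwa [Nat.div_add_mod i 2] at h6
  · rw [List.take_of_length_le (by rw [encode_length]; omega)]
    have h7 := key n le_rfl 0 (by omega)
    rwa [Nat.add_zero, take_full] at h7

lemma encode_count_U {A B : Finset (Fin n)} (hcond : Cond n A B) :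
    (encodeList A B).count U = n := by
  have h := encode_count A B n le_rfl
  rw [take_full, filter_lt_top, filter_lt_top] at h
  have := hcond.1
  omega

/-- From Dyck properties of the encoded word back to the pair conditions. -/
lemma encode_inv {A B : Finset (Fin n)}
    (hcnt : (encodeList A B).count U = (encodeList A B).count D)
    (hpre : ∀ i, ((encodeList A B).take i).count D ≤ ((encodeList A B).take i).count U) :
    Cond n A B := by
  have h := encode_count A B n le_rfl
  rw [take_full, filter_lt_top, filter_lt_top] at h
  have hcard : A.card = B.card := by omega
  refine ⟨hcard, ?_⟩
  intro t
  have hq : t.val < n := t.isLt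
  obtain ⟨hU, hD⟩ := encode_count A B t.val hq.le
  have h2 := hpre (2*t.val+1)
  rw [take_odd A B hq] at h2
  have heta : (⟨t.val, hq⟩ : Fin n) = t := Fin.eta t hq
  rw [heta] at h2
  rw [filter_le_fin, filter_lt_fin, filter_le_eq_lt_succ]
  have h3 := filter_card_succ B hq
  rw [heta] at h3
  by_cases hB : t ∈ B <;>
    [simp only [if_pos hB] at h2 h3; simp only [if_neg hB] at h2 h3] <;>
    simp only [List.count_append, cUU, cUD, cDU, cDD] at h2 <;> omega


/-- The Dyck word encoding a dominated pair. -/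
def pairToDyck (AB : {AB : Finset (Fin n) × Finset (Fin n) // Cond n AB.1 AB.2}) :
    {p : DyckWord // p.semilength = n} :=
  ⟨⟨encodeList AB.1.1 AB.1.2, encode_count_eq AB.2, fun i => encode_prefix AB.2 i⟩,
    encode_count_U AB.2⟩

/-- Decoded subsets of a Dyck word. -/
def decodeA (p : DyckWord) : Finset (Fin n) :=
  Finset.univ.filter (fun i => p.toList.getD (2*i.val+1) D = U)

def decodeB (p : DyckWord) : Finset (Fin n) :=
  Finset.univ.filter (fun i => p.toList.getD (2*i.val) U = D)

lemma decode_encode (p : DyckWord) (hp : p.semilength = n) :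
    encodeList (decodeA (n := n) p) (decodeB (n := n) p) = p.toList := by
  have hlen : p.toList.length = 2*n := by rw [← DyckWord.two_mul_semilength_eq_length, hp]
  apply List.ext_getElem?
  intro j
  rcases Nat.lt_or_ge j (2*n) with hj | hj
  · have hdm := Nat.div_add_mod j 2
    have hq : j/2 < n := by omega
    have hr : j % 2 = 0 ∨ j % 2 = 1 := by omega
    rcases hr with hr | hr
    · have hj' : j = 2*(j/2) := by omega
      rw [hj', encode_getElem?_even _ _ hq]
      have hplt : 2*(j/2) < p.toList.length := by omega
      rw [List.getElem?_eq_getElem hplt]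
      have hgetD : p.toList.getD (2*(j/2)) U = p.toList[2*(j/2)] := by
        rw [List.getD_eq_getElem?_getD, List.getElem?_eq_getElem hplt]; rfl
      have hmem : ((⟨j/2, hq⟩ : Fin n) ∈ decodeB p) ↔ p.toList.getD (2*(j/2)) U = D := by
        simp [decodeB]
      congr 1
      by_cases hD : p.toList[2*(j/2)] = D
      · rw [if_pos (hmem.mpr (hgetD.trans hD))]; exact hD.symm
      · rw [if_neg (fun hm => hD (hgetD.symm.trans (hmem.mp hm)))]
        exact ((DyckStep.dichotomy _).resolve_right hD).symm
    · have hj' : j = 2*(j/2)+1 := by omega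
      rw [hj', encode_getElem?_odd _ _ hq]
      have hplt : 2*(j/2)+1 < p.toList.length := by omega
      rw [List.getElem?_eq_getElem hplt]
      have hgetD : p.toList.getD (2*(j/2)+1) D = p.toList[2*(j/2)+1] := by
        rw [List.getD_eq_getElem?_getD, List.getElem?_eq_getElem hplt]; rfl
      have hmem : ((⟨j/2, hq⟩ : Fin n) ∈ decodeA p) ↔ p.toList.getD (2*(j/2)+1) D = U := by
        simp [decodeA]
      congr 1
      by_cases hU : p.toList[2*(j/2)+1] = U
      · rw [if_pos (hmem.mpr (hgetD.trans hU))]; exact hU.symm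
      · rw [if_neg (fun hm => hU (hgetD.symm.trans (hmem.mp hm)))]
        exact ((DyckStep.dichotomy _).resolve_left hU).symm
  · rw [List.getElem?_eq_none (by rw [encode_length]; omega),
      List.getElem?_eq_none (by omega)]

/-- Decoding a Dyck word of semilength `n` into a dominated pair. -/
def dyckToPair (p : {p : DyckWord // p.semilength = n}) :
    {AB : Finset (Fin n) × Finset (Fin n) // Cond n AB.1 AB.2} :=
  ⟨(decodeA p.1, decodeB p.1), by
    have he := decode_encode p.1 p.2
    apply encode_inv
    · rw [he]; exact p.1.count_U_eq_count_D
    · intro i; rw [he]; exact p.1.count_D_le_count_U i⟩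

/-- The equivalence between dominated pairs and Dyck words of semilength `n`. -/
def pairEquivDyck :
    {AB : Finset (Fin n) × Finset (Fin n) // Cond n AB.1 AB.2} ≃
    {p : DyckWord // p.semilength = n} where
  toFun := pairToDyck
  invFun := dyckToPair
  left_inv AB := by
    obtain ⟨⟨A, B⟩, hc⟩ := AB
    apply Subtype.ext
    rw [Prod.mk.injEq]
    constructor
    · refine Finset.ext fun i => ?_
      simp only [decodeA, dyckToPair, pairToDyck, Finset.mem_filter, Finset.mem_univ, true_and]
      refine Finset.mem_filter.trans ?_
      simp only [Finset.mem_univ, true_and]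
      have := encode_getElem?_odd A B i.isLt
      rw [List.getD_eq_getElem?_getD, Fin.eta] at *
      rw [this]
      by_cases hi : i ∈ A
      · simp [hi]
      · simp [hi]
    · refine Finset.ext fun i => ?_
      simp only [decodeB, dyckToPair, pairToDyck, Finset.mem_filter, Finset.mem_univ, true_and]
      refine Finset.mem_filter.trans ?_
      simp only [Finset.mem_univ, true_and]
      have := encode_getElem?_even A B i.isLt
      rw [List.getD_eq_getElem?_getD, Fin.eta] at *
      rw [this]
      by_cases hi : i ∈ B
      · simp [hi]
      · simp [hi]
  right_inv p := by
    apply Subtype.ext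
    apply DyckWord.ext
    exact decode_encode p.1 p.2

end Encode

open scoped Classical in
lemma card_avoids (n : ℕ) :
    Fintype.card {w : Equiv.Perm (Fin n) // Avoids321 n w} = catalan n := by
  classical
  rw [Fintype.card_congr ((permEquivPair (n := n)).trans pairEquivDyck)]
  exact DyckWord.card_dyckWord_semilength_eq_catalan n

end Stmt15Aux



open scoped Classical in
/-- the number of 321-avoiding permutations in `S_n` is the `n`-th Catalan
number `C_n = (1/(n+1))·binom(2n, n)`. -/
theorem stmt15 (n : ℕ) :
    (Finset.univ.filter (fun w : Equiv.Perm (Fin n) => Avoids321 n w)).card = catalan n ∧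
    (n + 1) * (Finset.univ.filter (fun w : Equiv.Perm (Fin n) => Avoids321 n w)).card
      = (2 * n).choose n := by
  have h1 : (Finset.univ.filter (fun w : Equiv.Perm (Fin n) => Avoids321 n w)).card
      = catalan n := by
    rw [← Fintype.card_subtype]
    exact Stmt15Aux.card_avoids n
  refine ⟨h1, ?_⟩
  rw [h1]
  exact succ_mul_catalan_eq_centralBinom n
end
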